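/- Let X be a closed topological manifold of dimension n and let L : E → F be a bundle morphism between orientable real vector bundles of the same fibre dimension over X. If the second Stiefel–Whitney class of one of the bundles vanishes while that of the other does not (e.g. w₂(E) = 0 and w₂(F) ≠ 0 in H²(X;ℤ₂), i.e. E admits a spin structure and F does not), then the covering dimension of Σ(L) is at least n − 2. -/

import Mathlib

set_option autoImplicit false

noncomputable section

open Bundle Set Module

/-- `HasCovDimLE Y m` : every finite open cover of `Y` has a finite open refinement in which
no point is included in more than `m + 1` elements. -/
def HasCovDimLE (Y : Type) [TopologicalSpace Y] (m : ℕ) : Prop :=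
  ∀ U : Finset (Set Y), (∀ u ∈ U, IsOpen u) → ⋃₀ (U : Set (Set Y)) = Set.univ →
    ∃ V : Finset (Set Y), (∀ v ∈ V, IsOpen v) ∧ ⋃₀ (V : Set (Set Y)) = Set.univ ∧
      (∀ v ∈ V, ∃ u ∈ U, v ⊆ u) ∧
      ∀ y : Y, {v ∈ (V : Set (Set Y)) | y ∈ v}.ncard ≤ m + 1

/-- The covering dimension of a topological space, as an element of `ℕ∞` (`⊤` if no finite
`m` works). -/
def covDim (Y : Type) [TopologicalSpace Y] : ℕ∞ :=
  sInf {d : ℕ∞ | ∃ m : ℕ, d = (m : ℕ∞) ∧ HasCovDimLE Y m}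

/-- The underlying graded groups of: relative singular homology `H_k(Y, A; R)` (with
`H_k(Y; R) = H_k(Y, ∅; R)`), singular cohomology `H^k(Y; G)`, Čech cohomology `Ȟ^k(Y; R)`
and the `Ext`-term `Ext¹_R(H_{k-1}(Y; R), G)` of the universal coefficient theorem. -/
structure CohomologyData (R : Type) [CommRing R] (G : Type) [AddCommGroup G] [Module R G] where
  /-- relative singular homology `H_k(Y, A; R)` -/
  Hrel : ∀ (Y : Type) [TopologicalSpace Y], Set Y → ℤ → Type
  instHrelAdd : ∀ (Y : Type) [TopologicalSpace Y] (A : Set Y) (k : ℤ), AddCommGroup (Hrel Y A k)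
  instHrelMod : ∀ (Y : Type) [TopologicalSpace Y] (A : Set Y) (k : ℤ), Module R (Hrel Y A k)
  /-- singular cohomology `H^k(Y; G)` -/
  Hco : ∀ (Y : Type) [TopologicalSpace Y], ℤ → Type
  instHcoAdd : ∀ (Y : Type) [TopologicalSpace Y] (k : ℤ), AddCommGroup (Hco Y k)
  /-- Čech cohomology `Ȟ^k(Y; R)` -/
  Hcech : ∀ (Y : Type) [TopologicalSpace Y], ℤ → Type
  instHcechAdd : ∀ (Y : Type) [TopologicalSpace Y] (k : ℤ), AddCommGroup (Hcech Y k)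
  /-- the group `Ext¹_R(H_{k-1}(Y; R), G)` appearing in the universal coefficient theorem -/
  ExtUCT : ∀ (Y : Type) [TopologicalSpace Y], ℤ → Type
  instExtAdd : ∀ (Y : Type) [TopologicalSpace Y] (k : ℤ), AddCommGroup (ExtUCT Y k)

attribute [instance] CohomologyData.instHrelAdd CohomologyData.instHrelMod
  CohomologyData.instHcoAdd CohomologyData.instHcechAdd CohomologyData.instExtAdd

/-- An axiomatization of the package consisting of singular homology of pairs (with
coefficients in a PID `R`), singular cohomology (with coefficients in an `R`-module `G`) and
Čech cohomology (with coefficients in `R`), together with: functoriality, the Kronecker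
pairing `α` (written `pair`, `α^k(η)(ξ) = ⟨η, ξ⟩`) and its naturality, the universal
coefficient exact sequence
`0 → Ext¹_R(H_{k-1}(Y;R), G) →^{β^k} H^k(Y;G) →^{α^k} Hom_R(H_k(Y;R), G) → 0`
(exactness at `H^k` and vanishing of the `Ext`-term on free homology), the homology long
exact sequence of a pair (the part `im j_* = ker π_*`), and the fact that non-vanishing of
`Ȟ^m` of a compact Hausdorff space forces its covering dimension to be at least `m`.
All of these are classical facts about the (co)homology of topological spaces; they are the
only properties used in the paper. -/
structure Theory (R : Type) [CommRing R] [IsDomain R] [IsPrincipalIdealRing R]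
    (G : Type) [AddCommGroup G] [Module R G] extends CohomologyData R G where
  /-- functoriality of relative homology for maps of pairs -/
  hmap : ∀ {Y Z : Type} [TopologicalSpace Y] [TopologicalSpace Z]
    (f : C(Y, Z)) {A : Set Y} {B : Set Z}, Set.MapsTo f A B →
    ∀ k : ℤ, Hrel Y A k →ₗ[R] Hrel Z B k
  /-- contravariant functoriality of singular cohomology -/
  cmap : ∀ {Y Z : Type} [TopologicalSpace Y] [TopologicalSpace Z]
    (f : C(Y, Z)) (k : ℤ), Hco Z k →+ Hco Y k
  cmap_id : ∀ (Y : Type) [TopologicalSpace Y] (k : ℤ) (x : Hco Y k),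
    cmap (ContinuousMap.id Y) k x = x
  /-- contravariant functoriality of Čech cohomology -/
  ccmap : ∀ {Y Z : Type} [TopologicalSpace Y] [TopologicalSpace Z]
    (f : C(Y, Z)) (k : ℤ), Hcech Z k →+ Hcech Y k
  /-- the Kronecker pairing `α^k : H^k(Y;G) → Hom_R(H_k(Y;R), G)`, `α^k(η)(ξ) = ⟨η, ξ⟩` -/
  pair : ∀ (Y : Type) [TopologicalSpace Y] (k : ℤ),
    Hco Y k →+ (Hrel Y (∅ : Set Y) k →ₗ[R] G)
  /-- naturality of the Kronecker pairing: `⟨f^*η, ξ⟩ = ⟨η, f_*ξ⟩` -/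
  pair_natural : ∀ {Y Z : Type} [TopologicalSpace Y] [TopologicalSpace Z] (f : C(Y, Z)) (k : ℤ)
    (η : Hco Z k) (ξ : Hrel Y (∅ : Set Y) k),
    pair Y k (cmap f k η) ξ = pair Z k η (hmap f (Set.mapsTo_empty _ _) k ξ)
  /-- the map `β^k : Ext¹_R(H_{k-1}(Y;R), G) → H^k(Y;G)` of the universal coefficient
  theorem -/
  betaMap : ∀ (Y : Type) [TopologicalSpace Y] (k : ℤ), ExtUCT Y k →+ Hco Y k
  /-- exactness of the universal coefficient sequence at `H^k(Y;G)`: `ker α^k = im β^k` -/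
  uct_exact : ∀ (Y : Type) [TopologicalSpace Y] (k : ℤ) (x : Hco Y k),
    pair Y k x = 0 ↔ x ∈ Set.range (betaMap Y k)
  /-- `Ext¹_R(H_{k-1}(Y;R), G)` vanishes if `H_{k-1}(Y;R)` is a free `R`-module -/
  uct_free : ∀ (Y : Type) [TopologicalSpace Y] (k : ℤ),
    Module.Free R (Hrel Y (∅ : Set Y) (k - 1)) → ∀ z : ExtUCT Y k, betaMap Y k z = 0
  /-- exactness of the long exact homology sequence of the pair `(X, X ∖ A)` at `H_k(X)`:
  `π_* ξ = 0` iff `ξ` comes from `H_k(X ∖ A)` -/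
  les_exact : ∀ (X : Type) [TopologicalSpace X] (A : Set X) (k : ℤ)
    (ξ : Hrel X (∅ : Set X) k),
    hmap (ContinuousMap.id X) (Set.mapsTo_empty _ _) k ξ = (0 : Hrel X Aᶜ k) ↔
      ∃ ζ : Hrel (↥(Aᶜ)) (∅ : Set ↥(Aᶜ)) k,
        hmap (⟨Subtype.val, continuous_subtype_val⟩ : C(↥(Aᶜ), X))
          (Set.mapsTo_empty _ _) k ζ = ξ
  /-- if the Čech cohomology `Ȟ^m(Y;R)` of a compact Hausdorff space is non-trivial
  then its covering dimension is at least `m` -/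
  dim_cech : ∀ (Y : Type) [TopologicalSpace Y] [CompactSpace Y] [T2Space Y] (m : ℕ),
    (∃ x : Hcech Y (m : ℤ), x ≠ 0) → (m : ℕ∞) ≤ covDim Y

/-- `X` is `R`-orientable (with respect to the homology theory `T`) if there is a compatible
continuous choice `o(λ)` of generators of the local homology modules
`H_n(X, X ∖ {λ}; R) ≅ R`: i.e. an open cover `{U_i}` of `X` and classes
`μ_i ∈ H_n(X, X ∖ U_i; R)` restricting to `o(λ)` for every `λ ∈ U_i`. -/
def ROrientable {R : Type} [CommRing R] [IsDomain R] [IsPrincipalIdealRing R]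
    {G : Type} [AddCommGroup G] [Module R G] (T : Theory R G)
    (n : ℕ) (X : Type) [TopologicalSpace X] : Prop :=
  ∃ o : ∀ x : X, T.Hrel X ({x}ᶜ) (n : ℤ),
    (∀ x, Submodule.span R {o x} = ⊤) ∧
    ∃ (ι : Type) (U : ι → Set X), (∀ i, IsOpen (U i)) ∧ (∀ x, ∃ i, x ∈ U i) ∧
      ∃ μ : ∀ i, T.Hrel X ((U i)ᶜ) (n : ℤ),
        ∀ (i) (x) (hx : x ∈ U i),
          T.hmap (ContinuousMap.id X)
            ((Set.mapsTo_id _).mono_right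
              (Set.compl_subset_compl.mpr (Set.singleton_subset_iff.mpr hx)))
            (n : ℤ) (μ i) = o x

/-- The full package: the (co)homology theories together with Poincaré–Lefschetz duality for
closed `R`-orientable topological `n`-manifolds (in the form of [Bredon, Cor. VI.8.4]: for a
closed subset `A ⊆ X` there is a commutative square consisting of the duality isomorphisms
`Ȟ^{n-k}(X;R) ≅ H_k(X;R)` and `Ȟ^{n-k}(A;R) ≅ H_k(X, X∖A;R)`, the restriction
`i^* : Ȟ^{n-k}(X;R) → Ȟ^{n-k}(A;R)` and `π_* : H_k(X;R) → H_k(X, X∖A;R)`), and the fact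
that every closed topological manifold is `R`-orientable when `2 = 0` in `R`. -/
structure GoodTheory (R : Type) [CommRing R] [IsDomain R] [IsPrincipalIdealRing R]
    (G : Type) [AddCommGroup G] [Module R G] extends Theory R G where
  /-- Poincaré–Lefschetz duality -/
  pd : ∀ (n : ℕ) (X : Type) [TopologicalSpace X] [T2Space X]
    [ChartedSpace (EuclideanSpace ℝ (Fin n)) X] [CompactSpace X],
    ROrientable toTheory n X →
    ∀ (k : ℤ) (A : Set X), IsClosed A →
      ∃ (pdX : Hcech X ((n : ℤ) - k) ≃+ Hrel X (∅ : Set X) k)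
        (pdA : Hcech (↥A) ((n : ℤ) - k) ≃+ Hrel X Aᶜ k),
        ∀ η : Hcech X ((n : ℤ) - k),
          pdA (ccmap (⟨Subtype.val, continuous_subtype_val⟩ : C(↥A, X)) ((n : ℤ) - k) η) =
          hmap (ContinuousMap.id X) (Set.mapsTo_empty _ _) k (pdX η)
  /-- every closed topological manifold is `R`-orientable if `2 = 0` in `R` -/
  orient_two : (2 : R) = 0 → ∀ (n : ℕ) (X : Type) [TopologicalSpace X] [T2Space X]
    [ChartedSpace (EuclideanSpace ℝ (Fin n)) X] [CompactSpace X],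
    ROrientable toTheory n X

/-- A (finite rank) vector bundle over the base `Y` with scalar field `𝕜`, packaged as a
structure: a model fibre `F` and a family of fibres `E y` together with all the data making
it a topological vector bundle. -/
structure VB (𝕜 : Type) [NontriviallyNormedField 𝕜] (Y : Type) [TopologicalSpace Y] :
    Type 1 where
  /-- the model fibre -/
  F : Type
  [nF : NormedAddCommGroup F]
  [sF : NormedSpace 𝕜 F]
  [fdF : FiniteDimensional 𝕜 F]
  /-- the fibres -/
  E : Y → Type
  [aE : ∀ y, AddCommGroup (E y)]
  [mE : ∀ y, Module 𝕜 (E y)]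
  [tE : ∀ y, TopologicalSpace (E y)]
  [tT : TopologicalSpace (Bundle.TotalSpace F E)]
  [fb : FiberBundle F E]
  [vb : VectorBundle 𝕜 F E]

attribute [instance] VB.nF VB.sF VB.fdF VB.aE VB.mE VB.tE VB.tT VB.fb VB.vb

/-- A morphism of vector bundles over `X`: a fibrewise (continuous) linear map which is
continuous as a map of total spaces. -/
def IsBundleMorphism {𝕜 : Type} [NontriviallyNormedField 𝕜] {X : Type} [TopologicalSpace X]
    (V W : VB 𝕜 X) (L : ∀ x, V.E x →L[𝕜] W.E x) : Prop :=
  Continuous fun p : Bundle.TotalSpace V.F V.E =>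
    (Bundle.TotalSpace.mk p.1 (L p.1 p.2) : Bundle.TotalSpace W.F W.E)

/-- The singular set `Σ(L) = {λ ∈ X | L_λ ∉ GL(E_λ, F_λ)}` of a bundle morphism `L`:
the set of points of the base over which `L` is not a linear isomorphism of fibres. -/
def singularSet {𝕜 : Type} [NontriviallyNormedField 𝕜] {X : Type} [TopologicalSpace X]
    (V W : VB 𝕜 X) (L : ∀ x, V.E x →L[𝕜] W.E x) : Set X :=
  {x : X | ¬ Function.Bijective (L x)}

/-- An `H^k(·;G)`-valued characteristic class `c`: it assigns to every vector bundle over a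
base `Y` a class `c(E) ∈ H^k(Y;G)`, such that `c(E₁) = f^* c(E₂)` whenever a continuous map
`f : Y → Z` is covered by a (fibrewise isomorphic, continuous) bundle map `E₁ → E₂`. -/
structure CharClass {R : Type} [CommRing R] [IsDomain R] [IsPrincipalIdealRing R]
    {G : Type} [AddCommGroup G] [Module R G] (T : GoodTheory R G)
    (𝕜 : Type) [NontriviallyNormedField 𝕜] (k : ℤ) where
  /-- the value of the characteristic class on a bundle -/
  cls : ∀ (Y : Type) [TopologicalSpace Y], VB 𝕜 Y → T.Hco Y k
  /-- naturality with respect to bundle maps covering continuous maps -/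
  natural : ∀ (Y Z : Type) [TopologicalSpace Y] [TopologicalSpace Z]
    (V : VB 𝕜 Y) (W : VB 𝕜 Z) (f : C(Y, Z)) (φ : ∀ y, V.E y ≃ₗ[𝕜] W.E (f y)),
    Continuous (fun p : Bundle.TotalSpace V.F V.E =>
      (Bundle.TotalSpace.mk (f p.1) (φ p.1 p.2) : Bundle.TotalSpace W.F W.E)) →
    cls Y V = T.cmap f k (cls Z W)

/-- `o` is an orientation of the real vector bundle `V` of rank `r`: a function assigning an
orientation to each fibre in such a way that near each point of the base the local
trivialization carries the orientations of the fibres into one fixed orientation of the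
model fibre. -/
def IsBundleOrientation {Y : Type} [TopologicalSpace Y] (r : ℕ) (V : VB ℝ Y)
    (o : ∀ y, Orientation ℝ (V.E y) (Fin r)) : Prop :=
  ∀ y₀ : Y, ∃ ω : Orientation ℝ V.F (Fin r),
    ∀ (y) (hy : y ∈ (trivializationAt V.F V.E y₀).baseSet),
      Orientation.map (Fin r)
        ((trivializationAt V.F V.E y₀).continuousLinearEquivAt ℝ y hy).toLinearEquiv
        (o y) = ω

/-- A real vector bundle is orientable if it admits an orientation. -/
def BundleOrientable {Y : Type} [TopologicalSpace Y] (V : VB ℝ Y) : Prop :=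
  ∃ o : ∀ y, Orientation ℝ (V.E y) (Fin (Module.finrank ℝ V.F)),
    IsBundleOrientation (Module.finrank ℝ V.F) V o

/-- Maps into a pullback total space are continuous as soon as both components are. -/
theorem continuous_into_pullback {B B' Z : Type} [TopologicalSpace B] [TopologicalSpace B']
    [TopologicalSpace Z] (F : Type) (E : B → Type) [TopologicalSpace (TotalSpace F E)]
    (f : B' → B) (g : Z → TotalSpace F (f *ᵖ E))
    (h1 : Continuous fun z => (g z).proj)
    (h2 : Continuous fun z => Pullback.lift f (g z)) : Continuous g := by
  rw [continuous_iff_le_induced]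
  have ht : (Pullback.TotalSpace.topologicalSpace F E f) =
      TopologicalSpace.induced (TotalSpace.proj) ‹TopologicalSpace B'› ⊓
        TopologicalSpace.induced (Pullback.lift f) ‹TopologicalSpace (TotalSpace F E)› := by
    rw [Pullback.TotalSpace.topologicalSpace, pullbackTopology_def]
  rw [ht, induced_inf, induced_compose, induced_compose]
  exact le_inf (continuous_iff_le_induced.mp h1) (continuous_iff_le_induced.mp h2)

/-- A bijective endomorphism of a finite-dimensional normed space is a unit. -/
theorem isUnit_iff_bijective {E : Type} [NormedAddCommGroup E] [NormedSpace ℝ E]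
    [FiniteDimensional ℝ E] (T : E →L[ℝ] E) : IsUnit T ↔ Function.Bijective T := by
  constructor
  · rintro ⟨u, rfl⟩
    refine Function.bijective_iff_has_inverse.mpr ⟨⇑u.inv, fun v => ?_, fun v => ?_⟩
    · have h := u.inv_mul
      calc u.inv (u.val v) = ((↑u⁻¹ * ↑u : E →L[ℝ] E)) v := rfl
        _ = v := by rw [h]; rfl
    · have h := u.mul_inv
      calc u.val (u.inv v) = ((↑u * ↑u⁻¹ : E →L[ℝ] E)) v := rfl
        _ = v := by rw [h]; rfl
  · intro h
    let q : E ≃ₗ[ℝ] E := LinearEquiv.ofBijective (T : E →ₗ[ℝ] E) h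
    let S : E →L[ℝ] E :=
      ⟨q.symm.toLinearMap, q.symm.toLinearMap.continuous_of_finiteDimensional⟩
    refine ⟨⟨T, S, ?_, ?_⟩, rfl⟩
    · ext v
      show T (q.symm v) = v
      exact q.apply_symm_apply v
    · ext v
      show q.symm (T v) = v
      exact q.symm_apply_apply v

/-- The singular set of a bundle morphism between bundles of equal finite rank is closed. -/
theorem isClosed_singularSet {X : Type} [TopologicalSpace X]
    (V W : VB ℝ X) (hrank : finrank ℝ V.F = finrank ℝ W.F)
    (L : ∀ x, V.E x →L[ℝ] W.E x) (hL : IsBundleMorphism V W L) :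
    IsClosed (singularSet V W L) := by
  rw [← isOpen_compl_iff, isOpen_iff_forall_mem_open]
  intro x₀ hx₀
  set e := trivializationAt V.F V.E x₀ with he
  set e' := trivializationAt W.F W.E x₀ with he'
  set U : Set X := e.baseSet ∩ e'.baseSet with hUdef
  have hUopen : IsOpen U := e.open_baseSet.inter e'.open_baseSet
  have hx₀U : x₀ ∈ U := ⟨FiberBundle.mem_baseSet_trivializationAt' x₀,
    FiberBundle.mem_baseSet_trivializationAt' x₀⟩
  let c0 : W.F ≃L[ℝ] V.F := ContinuousLinearEquiv.ofFinrankEq hrank.symm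
  set g : X → (V.F →L[ℝ] V.F) := fun x =>
    (c0.toContinuousLinearMap.comp (e'.continuousLinearMapAt ℝ x)).comp
      ((L x).comp (e.symmL ℝ x)) with hg
  have hgi : ∀ w0 : V.F, ContinuousOn (fun x => g x w0) U := by
    intro w0
    have hs : ContinuousOn (fun x => (⟨x, e.symm x w0⟩ : TotalSpace V.F V.E)) e.baseSet := by
      refine e.continuousOn_symm.comp
        ((continuous_id.prodMk continuous_const).continuousOn) ?_
      intro x hx; exact ⟨hx, mem_univ _⟩
    have ht : ContinuousOn
        (fun x => (⟨x, L x (e.symm x w0)⟩ : TotalSpace W.F W.E)) e.baseSet :=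
      hL.comp_continuousOn hs
    have hq : ContinuousOn
        (fun x => (e' (⟨x, L x (e.symm x w0)⟩ : TotalSpace W.F W.E)).2) U := by
      refine continuous_snd.comp_continuousOn
        (e'.continuousOn.comp (ht.mono inter_subset_left) ?_)
      intro x hx; exact e'.mem_source.mpr hx.2
    refine (c0.continuous.comp_continuousOn hq).congr ?_
    intro x hx
    show c0 (e'.continuousLinearMapAt ℝ x (L x (e.symmL ℝ x w0)))
      = c0 ((e' ⟨x, L x (e.symm x w0)⟩).2)
    have h1 : e.symmL ℝ x w0 = e.symm x w0 := e.symmL_apply hx.1 w0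
    have h2 : e'.continuousLinearMapAt ℝ x (L x (e.symm x w0))
        = e'.linearMapAt ℝ x (L x (e.symm x w0)) := rfl
    rw [h1, h2, Trivialization.linearMapAt_apply, if_pos hx.2]
  have hcont : ContinuousOn g U := by
    have b := Module.finBasis ℝ V.F
    have key : ∀ x : X, g x = ∑ i, (ContinuousLinearMap.smulRightL ℝ V.F V.F
        (LinearMap.toContinuousLinearMap (b.coord i))) (g x (b i)) := by
      intro x
      ext v
      rw [ContinuousLinearMap.sum_apply]
      have hterm : ∀ i, (ContinuousLinearMap.smulRightL ℝ V.F V.F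
          (LinearMap.toContinuousLinearMap (b.coord i))) (g x (b i)) v
          = b.repr v i • g x (b i) := fun i => rfl
      rw [Finset.sum_congr rfl (fun i _ => hterm i)]
      conv_lhs => rw [← b.sum_repr v]
      rw [map_sum]
      simp [map_smul]
    refine ContinuousOn.congr ?_ (fun x _ => key x)
    refine continuousOn_finset_sum _ (fun i _ => ?_)
    exact (ContinuousLinearMap.smulRightL ℝ V.F V.F
      (LinearMap.toContinuousLinearMap (b.coord i))).continuous.comp_continuousOn (hgi (b i))
  have hbij : ∀ x, ∀ hx : x ∈ U, (Function.Bijective (g x) ↔ Function.Bijective (L x)) := by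
    intro x hx
    have hfun : ⇑(g x) = (⇑c0 ∘ ⇑(e'.continuousLinearEquivAt ℝ x hx.2)) ∘
        (⇑(L x) ∘ ⇑(e.continuousLinearEquivAt ℝ x hx.1).symm) := by
      funext v
      show c0 (e'.continuousLinearMapAt ℝ x (L x (e.symmL ℝ x v))) =
        c0 ((e'.continuousLinearEquivAt ℝ x hx.2)
          (L x ((e.continuousLinearEquivAt ℝ x hx.1).symm v)))
      rw [e'.coe_continuousLinearEquivAt_eq hx.2, e.symm_continuousLinearEquivAt_eq hx.1]
    rw [hfun, Function.Bijective.of_comp_iff'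
      (c0.bijective.comp (e'.continuousLinearEquivAt ℝ x hx.2).bijective),
      Function.Bijective.of_comp_iff _ (e.continuousLinearEquivAt ℝ x hx.1).symm.bijective]
  refine ⟨U ∩ g ⁻¹' {T | IsUnit T}, ?_, hcont.isOpen_inter_preimage hUopen Units.isOpen, ?_, ?_⟩
  · rintro x ⟨hxU, hxg⟩
    have : Function.Bijective (L x) := (hbij x hxU).mp ((isUnit_iff_bijective _).mp hxg)
    simpa [singularSet] using this
  · exact hx₀U
  · exact (isUnit_iff_bijective _).mpr ((hbij x₀ hx₀U).mpr (by simpa [singularSet] using hx₀))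

/-- The pullback of a packaged vector bundle along a continuous map. -/
def VB.pullback {𝕜 : Type} [NontriviallyNormedField 𝕜] {Y X : Type} [TopologicalSpace Y]
    [TopologicalSpace X] (V : VB 𝕜 X) (f : C(Y, X)) : VB 𝕜 Y where
  F := V.F
  E := (f : Y → X) *ᵖ V.E
  aE := fun y => inferInstanceAs (AddCommGroup (V.E (f y)))
  mE := fun y => inferInstanceAs (Module 𝕜 (V.E (f y)))
  tE := fun y => inferInstanceAs (TopologicalSpace (V.E (f y)))
  tT := Pullback.TotalSpace.topologicalSpace V.F V.E (f : Y → X)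
  fb := FiberBundle.pullback (F := V.F) (E := V.E) f
  vb := VectorBundle.pullback (F := V.F) (E := V.E) 𝕜 f

/-- Let `X` be a closed topological manifold of dimension `n` and let
`L : E → F` be a bundle morphism between orientable real vector bundles of the same fibre
dimension over `X`. If the second Stiefel–Whitney class of one of the bundles vanishes while
that of the other does not (`w₂(E) = 0` and `w₂(F) ≠ 0` in `H²(X;ℤ₂)`, i.e. `E` admits a
spin structure and `F` does not, or vice versa), then the covering dimension of `Σ(L)` is at
least `n - 2`.
(The second Stiefel–Whitney class is represented by an `H²(·;ℤ₂)`-valued characteristic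
class `w`.) -/
theorem covDim_ge_of_stiefelWhitney_two
    (T : GoodTheory (ZMod 2) (ZMod 2))
    (n : ℕ) (X : Type) [TopologicalSpace X] [T2Space X]
    [ChartedSpace (EuclideanSpace ℝ (Fin n)) X] [CompactSpace X]
    (V W : VB ℝ X) (hrank : Module.finrank ℝ V.F = Module.finrank ℝ W.F)
    (hV : BundleOrientable V) (hW : BundleOrientable W)
    (L : ∀ x, V.E x →L[ℝ] W.E x) (hL : IsBundleMorphism V W L)
    (w : CharClass T ℝ (2 : ℤ))
    (hw : (w.cls X V = 0 ∧ w.cls X W ≠ 0) ∨ (w.cls X V ≠ 0 ∧ w.cls X W = 0)) :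
    ((n - 2 : ℕ) : ℕ∞) ≤ covDim ↥(singularSet V W L) := by
  rcases Nat.lt_or_ge n 2 with hn | hn
  · have h0 : n - 2 = 0 := by omega
    rw [h0, Nat.cast_zero]
    exact zero_le
  set S := singularSet V W L with hS
  have hcl : IsClosed S := isClosed_singularSet V W hrank L hL
  haveI : CompactSpace ↥S := isCompact_iff_compactSpace.mp hcl.isCompact
  have hor : ROrientable T.toTheory n X := T.orient_two (by decide) n X
  obtain ⟨pdX, pdA, hcomm⟩ := T.pd n X hor 2 S hcl
  set j : C(↥(Sᶜ), X) := ⟨Subtype.val, continuous_subtype_val⟩ with hj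
  let V' := VB.pullback V j
  let W' := VB.pullback W j
  have hnatV : w.cls ↥(Sᶜ) V' = T.cmap j 2 (w.cls X V) := by
    refine w.natural _ X V' V j (fun y => LinearEquiv.refl ℝ (V.E (j y))) ?_
    exact Pullback.continuous_lift V.F V.E (j : ↥(Sᶜ) → X)
  have hnatW : w.cls ↥(Sᶜ) W' = T.cmap j 2 (w.cls X W) := by
    refine w.natural _ X W' W j (fun y => LinearEquiv.refl ℝ (W.E (j y))) ?_
    exact Pullback.continuous_lift W.F W.E (j : ↥(Sᶜ) → X)
  have hVW' : w.cls ↥(Sᶜ) V' = w.cls ↥(Sᶜ) W' := by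
    have hb : ∀ y : ↥(Sᶜ), Function.Bijective (L (j y)) := fun y => not_not.mp y.2
    have h := w.natural _ _ V' W' (ContinuousMap.id ↥(Sᶜ))
      (fun y => LinearEquiv.ofBijective ((L (j y)) : V.E (j y) →ₗ[ℝ] W.E (j y)) (hb y)) ?_
    · rwa [T.cmap_id] at h
    · refine continuous_into_pullback W.F W.E (j : ↥(Sᶜ) → X) _ ?_ ?_
      · exact Pullback.continuous_proj V.F V.E (j : ↥(Sᶜ) → X)
      · exact hL.comp (Pullback.continuous_lift V.F V.E (j : ↥(Sᶜ) → X))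
  have hc : ∃ c : T.Hco X 2, c ≠ 0 ∧ T.cmap j 2 c = 0 := by
    rcases hw with ⟨h1, h2⟩ | ⟨h1, h2⟩
    · exact ⟨w.cls X W, h2, by rw [← hnatW, ← hVW', hnatV, h1, map_zero]⟩
    · exact ⟨w.cls X V, h1, by rw [← hnatV, hVW', hnatW, h2, map_zero]⟩
  obtain ⟨c, hc0, hcj⟩ := hc
  haveI : Fact (Nat.Prime 2) := ⟨Nat.prime_two⟩
  have hfree : Module.Free (ZMod 2) (T.Hrel X (∅ : Set X) (2 - 1)) :=
    Module.Free.of_divisionRing _ _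
  have hpairc : T.pair X 2 c ≠ 0 := by
    intro h0
    obtain ⟨z, hz⟩ := (T.uct_exact X 2 c).mp h0
    exact hc0 (by rw [← hz, T.uct_free X 2 hfree z])
  have hxi : ∃ ξ : T.Hrel X (∅ : Set X) 2, T.pair X 2 c ξ ≠ 0 := by
    by_contra hcon
    push_neg at hcon
    exact hpairc (LinearMap.ext fun ξ => hcon ξ)
  obtain ⟨ξ, hξ⟩ := hxi
  have hπ : T.hmap (ContinuousMap.id X) (Set.mapsTo_empty _ _) 2 ξ ≠ (0 : T.Hrel X Sᶜ 2) := by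
    intro h0
    obtain ⟨ζ, hζ⟩ := (T.les_exact X S 2 ξ).mp h0
    have hnat := T.pair_natural j 2 c ζ
    rw [hcj, hζ] at hnat
    simp only [map_zero, LinearMap.zero_apply] at hnat
    exact hξ hnat.symm
  have hη : pdA.symm (T.hmap (ContinuousMap.id X) (Set.mapsTo_empty _ _) 2 ξ) ≠ 0 := by
    intro h0
    apply hπ
    have h1 := congrArg (⇑pdA) h0
    rwa [AddEquiv.apply_symm_apply, map_zero] at h1
  have hcast : ((n - 2 : ℕ) : ℤ) = (n : ℤ) - 2 := by omega
  have hex : ∃ x : T.Hcech ↥S (((n - 2 : ℕ) : ℤ)), x ≠ 0 := by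
    rw [hcast]
    exact ⟨pdA.symm (T.hmap (ContinuousMap.id X) (Set.mapsTo_empty _ _) 2 ξ), hη⟩
  exact T.dim_cech ↥S (n - 2) hex

end
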